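/- Suppose 𝒮 ⊆ T((ℝ^d)) is closed under all dilations d_λ for λ > 0, is completely metrizable, and the maps x ↦ ⟨π_n(u), π_n(x)⟩ are continuous for each u ∈ 𝒮* and each n. Then for every u ∈ 𝒮* there exists a nonempty open subset U ⊆ 𝒮 on which x ↦ ⟨u, x⟩ is continuous and is the uniform limit of the partial sums Σ_{n=0}^N ⟨π_n(u), π_n(x)⟩. -/

import Mathlib

/-- The extended tensor algebra `T((ℝ^d))`, as formal series of coefficients indexed by
words in `d` letters. -/
abbrev TA (d : ℕ) := List (Fin d) → ℝ

/-- The level-`n` pairing `⟨π_n(u), π_n(x)⟩`, a (finite) sum over all words of length `n`. -/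
noncomputable def levelPair {d : ℕ} (u x : TA d) (n : ℕ) : ℝ :=
  ∑' I : {I : List (Fin d) // I.length = n}, u I * x I

/-- The dilation `d_λ`, multiplying the level-`n` component by `λ^n`. -/
def dil {d : ℕ} (lam : ℝ) (x : TA d) : TA d := fun I => lam ^ I.length * x I


lemma levelPair_dil {d : ℕ} (u x : TA d) (lam : ℝ) (n : ℕ) :
    levelPair u (dil lam x) n = lam ^ n * levelPair u x n := by
  unfold levelPair dil
  rw [← tsum_mul_left]
  apply tsum_congr
  rintro ⟨I, hI⟩
  simp only [hI]
  ring

/-- if the state space `𝒮` (realized in `T((ℝ^d))` via `ι`) is closed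
under all dilations `d_λ`, `λ > 0`, is completely metrizable, and all the level pairings
`x ↦ ⟨π_n v, π_n (ι x)⟩` are continuous for dual elements `v`, then for every `u ∈ 𝒮*`
there is a nonempty open subset `U ⊆ 𝒮` on which `x ↦ ⟨u, ι x⟩` is continuous and is the
uniform limit of its defining partial sums. -/
theorem continuity_on_open_subset {d : ℕ} (𝒮 : Type*)
    [MetricSpace 𝒮] [CompleteSpace 𝒮] [Nonempty 𝒮]
    (ι : 𝒮 → TA d)
    (hdil : ∀ lam : ℝ, 0 < lam → ∀ x : 𝒮, ∃ y : 𝒮, ι y = dil lam (ι x))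
    (hcont : ∀ v : TA d, (∀ x : 𝒮, Summable fun n => |levelPair v (ι x) n|) →
      ∀ n : ℕ, Continuous (fun x : 𝒮 => levelPair v (ι x) n))
    (u : TA d)
    (hu : ∀ x : 𝒮, Summable (fun n => |levelPair u (ι x) n|)) :
    ∃ U : Set 𝒮, IsOpen U ∧ U.Nonempty ∧
      ContinuousOn (fun x : 𝒮 => ∑' n, levelPair u (ι x) n) U ∧
      TendstoUniformlyOn (fun N x => ∑ n ∈ Finset.range (N + 1), levelPair u (ι x) n)
        (fun x => ∑' n, levelPair u (ι x) n) Filter.atTop U := by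
  -- the sets A K
  set A : ℕ → Set 𝒮 := fun K => {x | ∀ n : ℕ, |levelPair u (ι x) n| ≤ (K : ℝ) * (1/2) ^ n}
    with hA
  have hclosed : ∀ K, IsClosed (A K) := by
    intro K
    have : A K = ⋂ n : ℕ, {x | |levelPair u (ι x) n| ≤ (K : ℝ) * (1/2) ^ n} := by
      ext x; simp [hA, Set.mem_iInter]
    rw [this]
    refine isClosed_iInter fun n => ?_
    exact isClosed_le ((hcont u hu n).abs) continuous_const
  have hunion : ⋃ K, A K = Set.univ := by
    refine Set.eq_univ_of_forall fun x => ?_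
    obtain ⟨y, hy⟩ := hdil 2 (by norm_num) x
    have hsum : Summable fun n => |levelPair u (ι y) n| := hu y
    have hval : ∀ n, |levelPair u (ι y) n| = 2 ^ n * |levelPair u (ι x) n| := by
      intro n
      rw [hy, levelPair_dil, abs_mul, abs_pow]
      norm_num
    have hbdd : ∃ C : ℝ, ∀ n, 2 ^ n * |levelPair u (ι x) n| ≤ C := by
      have := hsum.tendsto_atTop_zero
      have hb : BddAbove (Set.range fun n => |levelPair u (ι y) n|) := by
        exact this.bddAbove_range
      obtain ⟨C, hC⟩ := hb
      exact ⟨C, fun n => by rw [← hval]; exact hC ⟨n, rfl⟩⟩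
    obtain ⟨C, hC⟩ := hbdd
    refine Set.mem_iUnion.2 ⟨⌈C⌉₊, fun n => ?_⟩
    have h1 : |levelPair u (ι x) n| = (2 ^ n * |levelPair u (ι x) n|) * (1/2) ^ n := by
      rw [mul_comm (2^n : ℝ), mul_assoc, ← mul_pow]
      norm_num
    rw [h1]
    have h2 : (2:ℝ) ^ n * |levelPair u (ι x) n| ≤ (⌈C⌉₊ : ℝ) :=
      (hC n).trans (Nat.le_ceil C)
    exact mul_le_mul_of_nonneg_right h2 (by positivity)
  obtain ⟨K, hK⟩ := nonempty_interior_of_iUnion_of_closed hclosed hunion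
  have hsub : interior (A K) ⊆ A K := interior_subset
  have htu0 : TendstoUniformlyOn (fun N x => ∑ n ∈ Finset.range N, levelPair u (ι x) n)
      (fun x => ∑' n, levelPair u (ι x) n) Filter.atTop (interior (A K)) := by
    apply tendstoUniformlyOn_tsum_nat (f := fun n x => levelPair u (ι x) n)
      (u := fun n => (K : ℝ) * (1/2) ^ n)
    · exact (summable_geometric_of_lt_one (by norm_num) (by norm_num)).mul_left _
    · intro n x hx
      exact (hsub hx) n
  have htu : TendstoUniformlyOn (fun N x => ∑ n ∈ Finset.range (N + 1), levelPair u (ι x) n)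
      (fun x => ∑' n, levelPair u (ι x) n) Filter.atTop (interior (A K)) := by
    rw [Metric.tendstoUniformlyOn_iff] at htu0 ⊢
    intro ε hε
    obtain ⟨N0, hN0⟩ := (Filter.eventually_atTop).1 (htu0 ε hε)
    exact Filter.eventually_atTop.2 ⟨N0, fun N hN => hN0 (N + 1) (le_trans hN (Nat.le_succ N))⟩
  refine ⟨interior (A K), isOpen_interior, hK, ?_, htu⟩
  apply htu.continuousOn
  apply Filter.Eventually.frequently
  filter_upwards with N
  exact (continuous_finset_sum _ fun n _ => hcont u hu n).continuousOn
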